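/- Let Z, Z⁺, H, Q be square-integrable random n×m matrices, let α ∈ (0,1) and ω ∈ [0,1], and suppose the compression-error bound E[‖(Z − H) − Q‖²] ≤ ω·E[‖Z − H‖²] holds. Set H⁺ := H + α·Q. Then for every τ > 1, E[‖Z⁺ − H⁺‖²] ≤ τ·(1 − α(1 − ω))·E[‖Z − H‖²] + (τ/(τ − 1))·E[‖Z⁺ − Z‖²]. -/

import Mathlib

open MeasureTheory Finset

/-- Squared Frobenius norm of a real matrix. -/
def frobSq {n m : ℕ} (M : Matrix (Fin n) (Fin m) ℝ) : ℝ := ∑ i, ∑ j, (M i j) ^ 2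

lemma frobSq_nonneg {n m : ℕ} (M : Matrix (Fin n) (Fin m) ℝ) : 0 ≤ frobSq M :=
  Finset.sum_nonneg fun _ _ => Finset.sum_nonneg fun _ _ => sq_nonneg _

lemma frobSq_smul {n m : ℕ} (c : ℝ) (M : Matrix (Fin n) (Fin m) ℝ) :
    frobSq (c • M) = c ^ 2 * frobSq M := by
  simp [frobSq, Matrix.smul_apply, mul_pow, Finset.mul_sum, smul_eq_mul]

lemma scalar_young {τ : ℝ} (hτ : 1 < τ) (x y : ℝ) :
    (x + y) ^ 2 ≤ τ * x ^ 2 + τ / (τ - 1) * y ^ 2 := by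
  have hs : 0 < τ - 1 := by linarith
  have hc : τ / (τ - 1) * (τ - 1) = τ := div_mul_cancel₀ _ (ne_of_gt hs)
  nlinarith [sq_nonneg ((τ - 1) * x - y), mul_nonneg (div_nonneg (by linarith : (0:ℝ) ≤ τ) hs.le) (sq_nonneg y)]

lemma frobSq_young {n m : ℕ} {τ : ℝ} (hτ : 1 < τ) (A B : Matrix (Fin n) (Fin m) ℝ) :
    frobSq (A + B) ≤ τ * frobSq A + τ / (τ - 1) * frobSq B := by
  calc frobSq (A + B) = ∑ i, ∑ j, (A i j + B i j) ^ 2 := by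
        simp [frobSq, Matrix.add_apply]
    _ ≤ ∑ i, ∑ j, (τ * (A i j) ^ 2 + τ / (τ - 1) * (B i j) ^ 2) :=
        Finset.sum_le_sum fun i _ => Finset.sum_le_sum fun j _ => scalar_young hτ _ _
    _ = τ * frobSq A + τ / (τ - 1) * frobSq B := by
        simp [frobSq, Finset.mul_sum, Finset.sum_add_distrib]

lemma scalar_convex {α : ℝ} (hα0 : 0 ≤ α) (hα1 : α ≤ 1) (x y : ℝ) :
    ((1 - α) * x + α * y) ^ 2 ≤ (1 - α) * x ^ 2 + α * y ^ 2 := by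
  nlinarith [mul_nonneg (mul_nonneg hα0 (by linarith : (0:ℝ) ≤ 1 - α)) (sq_nonneg (x - y))]

lemma frobSq_convex {n m : ℕ} {α : ℝ} (hα0 : 0 ≤ α) (hα1 : α ≤ 1)
    (A B : Matrix (Fin n) (Fin m) ℝ) :
    frobSq ((1 - α) • A + α • B) ≤ (1 - α) * frobSq A + α * frobSq B := by
  calc frobSq ((1 - α) • A + α • B) = ∑ i, ∑ j, ((1 - α) * A i j + α * B i j) ^ 2 := by
        simp [frobSq, Matrix.add_apply, Matrix.smul_apply, smul_eq_mul]
    _ ≤ ∑ i, ∑ j, ((1 - α) * (A i j) ^ 2 + α * (B i j) ^ 2) :=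
        Finset.sum_le_sum fun i _ => Finset.sum_le_sum fun j _ => scalar_convex hα0 hα1 _ _
    _ = (1 - α) * frobSq A + α * frobSq B := by
        simp [frobSq, Finset.mul_sum, Finset.sum_add_distrib]

lemma measurable_frobSq {n m : ℕ} {Ω : Type*} [MeasurableSpace Ω]
    {f : Ω → Matrix (Fin n) (Fin m) ℝ} (hf : ∀ i j, Measurable fun ω => f ω i j) :
    Measurable fun ω => frobSq (f ω) := by
  unfold frobSq
  exact Finset.measurable_sum _ fun i _ =>
    Finset.measurable_sum _ fun j _ => (hf i j).pow_const 2

lemma frobSq_sub_le {n m : ℕ} (A B : Matrix (Fin n) (Fin m) ℝ) :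
    frobSq (A - B) ≤ 2 * frobSq A + 2 * frobSq B := by
  calc frobSq (A - B) = ∑ i, ∑ j, (A i j - B i j) ^ 2 := by
        simp [frobSq, Matrix.sub_apply]
    _ ≤ ∑ i, ∑ j, (2 * (A i j) ^ 2 + 2 * (B i j) ^ 2) :=
        Finset.sum_le_sum fun i _ => Finset.sum_le_sum fun j _ => by nlinarith [sq_nonneg (A i j + B i j)]
    _ = 2 * frobSq A + 2 * frobSq B := by
        simp [frobSq, Finset.mul_sum, Finset.sum_add_distrib]

lemma integrable_frobSq_sub {n m : ℕ} {Ω : Type*} [MeasurableSpace Ω] {P : Measure Ω}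
    {f g : Ω → Matrix (Fin n) (Fin m) ℝ}
    (hf : ∀ i j, Measurable fun ω => f ω i j) (hg : ∀ i j, Measurable fun ω => g ω i j)
    (hfi : Integrable (fun ω => frobSq (f ω)) P) (hgi : Integrable (fun ω => frobSq (g ω)) P) :
    Integrable (fun ω => frobSq (f ω - g ω)) P := by
  refine Integrable.mono' ((hfi.const_mul 2).add (hgi.const_mul 2))
    ((measurable_frobSq (fun i j => (hf i j).sub (hg i j))).aestronglyMeasurable) ?_
  filter_upwards with ω
  rw [Real.norm_eq_abs, abs_of_nonneg (frobSq_nonneg _)]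
  exact frobSq_sub_le _ _

/-- Error-compensation recursion for the reference point:
if `E‖(Z − H) − Q‖² ≤ ω E‖Z − H‖²` and `H⁺ = H + α Q`, then for every `τ > 1`,
`E‖Z⁺ − H⁺‖² ≤ τ (1 − α(1 − ω)) E‖Z − H‖² + (τ/(τ−1)) E‖Z⁺ − Z‖²`. -/
theorem statement12 {n m : ℕ}
    {Ω : Type*} [MeasurableSpace Ω] (P : Measure Ω) [IsProbabilityMeasure P]
    (α ωc : ℝ) (hα0 : 0 < α) (hα1 : α < 1) (hωc0 : 0 ≤ ωc) (hωc1 : ωc ≤ 1)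
    (Z Zp H Q : Ω → Matrix (Fin n) (Fin m) ℝ)
    (hZmeas : ∀ i j, Measurable fun ω => Z ω i j)
    (hZpmeas : ∀ i j, Measurable fun ω => Zp ω i j)
    (hHmeas : ∀ i j, Measurable fun ω => H ω i j)
    (hQmeas : ∀ i j, Measurable fun ω => Q ω i j)
    (hZint : Integrable (fun ω => frobSq (Z ω)) P)
    (hZpint : Integrable (fun ω => frobSq (Zp ω)) P)
    (hHint : Integrable (fun ω => frobSq (H ω)) P)
    (hQint : Integrable (fun ω => frobSq (Q ω)) P)
    (hcomp : ∫ ω, frobSq ((Z ω - H ω) - Q ω) ∂P ≤ ωc * ∫ ω, frobSq (Z ω - H ω) ∂P)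
    (Hp : Ω → Matrix (Fin n) (Fin m) ℝ) (hHp : ∀ ω, Hp ω = H ω + α • Q ω)
    (τ : ℝ) (hτ : 1 < τ) :
    ∫ ω, frobSq (Zp ω - Hp ω) ∂P ≤
      τ * (1 - α * (1 - ωc)) * ∫ ω, frobSq (Z ω - H ω) ∂P +
        τ / (τ - 1) * ∫ ω, frobSq (Zp ω - Z ω) ∂P := by
  have hZH : ∀ i j, Measurable fun ω => (Z ω - H ω) i j := fun i j => by
    simpa [Matrix.sub_apply, Pi.sub_def] using (hZmeas i j).sub (hHmeas i j)
  have I1 : Integrable (fun ω => frobSq (Z ω - H ω)) P :=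
    integrable_frobSq_sub hZmeas hHmeas hZint hHint
  have I2 : Integrable (fun ω => frobSq ((Z ω - H ω) - Q ω)) P :=
    integrable_frobSq_sub hZH hQmeas I1 hQint
  have I3 : Integrable (fun ω => frobSq (Zp ω - Z ω)) P :=
    integrable_frobSq_sub hZpmeas hZmeas hZpint hZint
  have hαQmeas : ∀ i j, Measurable fun ω => (H ω + α • Q ω) i j := fun i j => by
    simpa [Matrix.add_apply, Matrix.smul_apply, smul_eq_mul, Pi.add_def] using
      (hHmeas i j).add ((hQmeas i j).const_mul α)
  have hαQint : Integrable (fun ω => frobSq (H ω + α • Q ω)) P := by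
    have h1 : Integrable (fun ω => frobSq (H ω - (-α) • Q ω)) P := by
      refine integrable_frobSq_sub hHmeas (fun i j => by
        simpa [Matrix.smul_apply, smul_eq_mul] using (hQmeas i j).const_mul (-α)) hHint ?_
      simp only [frobSq_smul]
      exact hQint.const_mul _
    have hrw : ∀ ω, H ω - (-α) • Q ω = H ω + α • Q ω := fun ω => by module
    simpa only [hrw] using h1
  have ILHS : Integrable (fun ω => frobSq (Zp ω - (H ω + α • Q ω))) P :=
    integrable_frobSq_sub hZpmeas hαQmeas hZpint hαQint
  have hs : 0 < τ - 1 := by linarith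
  -- pointwise inequality
  have hpt : ∀ ω, frobSq (Zp ω - (H ω + α • Q ω)) ≤
      τ * (1 - α) * frobSq (Z ω - H ω) + τ * α * frobSq ((Z ω - H ω) - Q ω) +
        τ / (τ - 1) * frobSq (Zp ω - Z ω) := by
    intro ω
    have hdec : Zp ω - (H ω + α • Q ω) =
        ((1 - α) • (Z ω - H ω) + α • ((Z ω - H ω) - Q ω)) + (Zp ω - Z ω) := by
      module
    rw [hdec]
    have h1 := frobSq_young hτ ((1 - α) • (Z ω - H ω) + α • ((Z ω - H ω) - Q ω)) (Zp ω - Z ω)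
    have h2 := frobSq_convex hα0.le hα1.le (Z ω - H ω) ((Z ω - H ω) - Q ω)
    have hτ0 : (0:ℝ) ≤ τ := by linarith
    nlinarith [mul_le_mul_of_nonneg_left h2 hτ0]
  -- integrate
  have hRHSint : Integrable (fun ω =>
      τ * (1 - α) * frobSq (Z ω - H ω) + τ * α * frobSq ((Z ω - H ω) - Q ω) +
        τ / (τ - 1) * frobSq (Zp ω - Z ω)) P :=
    ((I1.const_mul (τ * (1 - α))).add (I2.const_mul (τ * α))).add (I3.const_mul (τ / (τ - 1)))
  have hmono := integral_mono ILHS hRHSint hpt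
  have heq : ∫ ω, (τ * (1 - α) * frobSq (Z ω - H ω) + τ * α * frobSq ((Z ω - H ω) - Q ω) +
        τ / (τ - 1) * frobSq (Zp ω - Z ω)) ∂P =
      τ * (1 - α) * ∫ ω, frobSq (Z ω - H ω) ∂P + τ * α * ∫ ω, frobSq ((Z ω - H ω) - Q ω) ∂P +
        τ / (τ - 1) * ∫ ω, frobSq (Zp ω - Z ω) ∂P := by
    have J1 : Integrable (fun ω => τ * (1 - α) * frobSq (Z ω - H ω)) P := I1.const_mul _
    have J2 : Integrable (fun ω => τ * α * frobSq ((Z ω - H ω) - Q ω)) P := I2.const_mul _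
    have J3 : Integrable (fun ω => τ / (τ - 1) * frobSq (Zp ω - Z ω)) P := I3.const_mul _
    have J12 : Integrable (fun ω => τ * (1 - α) * frobSq (Z ω - H ω) +
        τ * α * frobSq ((Z ω - H ω) - Q ω)) P := J1.add J2
    rw [integral_add J12 J3, integral_add J1 J2,
      integral_const_mul, integral_const_mul, integral_const_mul]
  rw [heq] at hmono
  simp only [hHp]
  refine hmono.trans ?_
  have hτα : (0:ℝ) ≤ τ * α := by positivity
  have h3 : τ * α * ∫ ω, frobSq ((Z ω - H ω) - Q ω) ∂P ≤
      τ * α * (ωc * ∫ ω, frobSq (Z ω - H ω) ∂P) :=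
    mul_le_mul_of_nonneg_left hcomp hτα
  nlinarith [h3]
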